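/- Let E be a real normed vector space equipped with its Borel σ-algebra, let κ be a Markov kernel from E to E, and let μ be a probability measure on E that is invariant for κ (i.e. the composition of μ with κ is μ: for every bounded measurable f, ∫_E (∫_E f dκ(x)) μ(dx) = ∫_E f dμ). Assume the Harnack inequality: there is c ≥ 0 such that for every bounded measurable f ≥ 0 and all x, y ∈ E, (∫ f dκ(x))² ≤ (∫ f² dκ(y)) · e^{c‖x − y‖²}. Let r > 0 satisfy μ({x : ‖x‖ < r}) ≥ 1/2. Then for every bounded measurable f ≥ 0 with ∫ f² dμ ≤ 1 and every x ∈ E, (∫ f dκ(x))² ≤ 2 e^{c(‖x‖ + r)²}. -/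

import Mathlib

open MeasureTheory ProbabilityTheory Real

/-- Step (a) in the proof of Theorem 1.1: if `κ` is a Markov kernel with invariant
probability measure `μ` satisfying the Harnack inequality
`(∫ f dκ(x))² ≤ (∫ f² dκ(y)) e^{c ‖x-y‖²}` for bounded measurable `f ≥ 0`, and
`μ({‖·‖ < r}) ≥ 1/2`, then for bounded measurable `f ≥ 0` with `∫ f² dμ ≤ 1`,
`(∫ f dκ(x))² ≤ 2 e^{c (‖x‖ + r)²}` for every `x`. -/
theorem harnack_pointwise_bound
    {E : Type*} [NormedAddCommGroup E] [NormedSpace ℝ E]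
    [MeasurableSpace E] [BorelSpace E]
    (κ : ProbabilityTheory.Kernel E E) [ProbabilityTheory.IsMarkovKernel κ]
    (μ : MeasureTheory.Measure E) [MeasureTheory.IsProbabilityMeasure μ]
    (hinv : ∀ f : E → ℝ, Measurable f → (∃ C, ∀ x, |f x| ≤ C) →
      ∫ x, (∫ y, f y ∂(κ x)) ∂μ = ∫ y, f y ∂μ)
    (c : ℝ) (hc : 0 ≤ c)
    (harnack : ∀ f : E → ℝ, Measurable f → (∃ C, ∀ x, |f x| ≤ C) → (∀ x, 0 ≤ f x) →
      ∀ x y : E, (∫ z, f z ∂(κ x)) ^ 2 ≤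
        (∫ z, (f z) ^ 2 ∂(κ y)) * Real.exp (c * ‖x - y‖ ^ 2))
    (r : ℝ) (hr : 0 < r) (hμr : (1 : ENNReal) / 2 ≤ μ {x : E | ‖x‖ < r}) :
    ∀ f : E → ℝ, Measurable f → (∃ C, ∀ x, |f x| ≤ C) → (∀ x, 0 ≤ f x) →
      (∫ z, (f z) ^ 2 ∂μ) ≤ 1 →
      ∀ x : E, (∫ z, f z ∂(κ x)) ^ 2 ≤ 2 * Real.exp (c * (‖x‖ + r) ^ 2) := by
  intro f hfm ⟨C, hfC⟩ hf0 hfL2 x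
  set A : ℝ := (∫ z, f z ∂(κ x)) ^ 2 with hA
  have hA0 : 0 ≤ A := sq_nonneg _
  set g : E → ℝ := fun y => ∫ z, (f z) ^ 2 ∂(κ y) with hg
  -- measurability of g
  have hgm : Measurable g := by
    have : StronglyMeasurable fun y => ∫ z, (f z) ^ 2 ∂(κ y) :=
      MeasureTheory.StronglyMeasurable.integral_kernel_prod_right
        (f := fun (_ : E) z => (f z) ^ 2) (κ := κ)
        ((hfm.pow_const 2).stronglyMeasurable.comp_measurable measurable_snd)
    exact this.measurable
  have hg0 : ∀ y, 0 ≤ g y := fun y => integral_nonneg fun z => sq_nonneg _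
  have hgC : ∀ y, g y ≤ C ^ 2 := by
    intro y
    have : ∀ z, (f z) ^ 2 ≤ C ^ 2 := fun z => by
      have := hfC z
      nlinarith [abs_nonneg (f z), le_abs_self (f z), neg_abs_le (f z)]
    calc g y ≤ ∫ _, C ^ 2 ∂(κ y) := by
          apply integral_mono_of_nonneg (Filter.Eventually.of_forall fun z => sq_nonneg _)
            (integrable_const _) (Filter.Eventually.of_forall this)
      _ = C ^ 2 := by simp
  have hgint : Integrable g μ := by
    apply (integrable_const (C ^ 2)).mono' hgm.aestronglyMeasurable
    filter_upwards with y
    rw [Real.norm_eq_abs, abs_of_nonneg (hg0 y)]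
    exact hgC y
  -- ∫ g dμ = ∫ f² dμ ≤ 1
  have hCbd : ∃ C', ∀ z, |(f z) ^ 2| ≤ C' := by
    refine ⟨C ^ 2, fun z => ?_⟩
    rw [abs_of_nonneg (sq_nonneg _)]
    have := hfC z
    nlinarith [abs_nonneg (f z), le_abs_self (f z), neg_abs_le (f z)]
  have hgint1 : ∫ y, g y ∂μ ≤ 1 := by
    rw [hg]
    rw [hinv (fun z => (f z) ^ 2) (hfm.pow_const 2) hCbd]
    exact hfL2
  -- the ball
  set B : Set E := {y : E | ‖y‖ < r} with hB
  have hBm : MeasurableSet B := measurableSet_lt measurable_norm measurable_const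
  -- pointwise bound on B
  have key : ∀ y ∈ B, A ≤ g y * Real.exp (c * (‖x‖ + r) ^ 2) := by
    intro y hy
    refine le_trans (harnack f hfm ⟨C, hfC⟩ hf0 x y) ?_
    apply mul_le_mul_of_nonneg_left _ (hg0 y)
    apply Real.exp_le_exp.mpr
    apply mul_le_mul_of_nonneg_left _ hc
    have h1 : ‖x - y‖ ≤ ‖x‖ + r :=
      (norm_sub_le x y).trans (by linarith [hy.out])
    exact pow_le_pow_left₀ (norm_nonneg _) h1 2
  -- integrate over B
  have hμB1 : μ B ≤ 1 := prob_le_one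
  have hμBr : (1 / 2 : ℝ) ≤ (μ B).toReal := by
    have h := ENNReal.toReal_mono (lt_of_le_of_lt hμB1 ENNReal.one_lt_top).ne hμr
    simpa [ENNReal.toReal_div] using h
  have hL : (μ B).toReal * A = ∫ _ in B, A ∂μ := by
    rw [setIntegral_const, smul_eq_mul]
    rfl
  have hint : ∫ _ in B, A ∂μ ≤ ∫ y in B, g y * Real.exp (c * (‖x‖ + r) ^ 2) ∂μ := by
    apply setIntegral_mono_on ((integrableOn_const_iff (C := A)).mpr (Or.inr (lt_of_le_of_lt hμB1 ENNReal.one_lt_top)))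
      ((hgint.mul_const _).integrableOn) hBm key
  have hint2 : ∫ y in B, g y * Real.exp (c * (‖x‖ + r) ^ 2) ∂μ
      ≤ Real.exp (c * (‖x‖ + r) ^ 2) := by
    rw [integral_mul_const]
    have h1 : ∫ y in B, g y ∂μ ≤ ∫ y, g y ∂μ :=
      setIntegral_le_integral hgint (Filter.Eventually.of_forall hg0)
    have h2 : ∫ y in B, g y ∂μ ≤ 1 := h1.trans hgint1
    calc (∫ y in B, g y ∂μ) * Real.exp (c * (‖x‖ + r) ^ 2)
        ≤ 1 * Real.exp (c * (‖x‖ + r) ^ 2) :=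
          mul_le_mul_of_nonneg_right h2 (Real.exp_nonneg _)
      _ = Real.exp (c * (‖x‖ + r) ^ 2) := one_mul _
  have : (1 / 2 : ℝ) * A ≤ Real.exp (c * (‖x‖ + r) ^ 2) := by
    calc (1 / 2 : ℝ) * A ≤ (μ B).toReal * A := mul_le_mul_of_nonneg_right hμBr hA0
      _ = ∫ _ in B, A ∂μ := hL
      _ ≤ _ := hint.trans hint2
  linarith
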